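/- For fixed integers a ≥ 0 and b ≥ 1, the Fuss-Catalan numbers F_m(a,b) = (b/(ma+b)) · C(ma+b, m) satisfy: the generating function C_{a,b}(t) = ∑_{m≥0} F_m(a,b) t^m obeys the functional equation C_{a,b}(t) = (t · C_{a,b}(t)^{a/b} + 1)^b; in particular for b = 1, C_{a,1}(t) = t · C_{a,1}(t)^a + 1. -/

import Mathlib

open Finset PowerSeries

/-- The Fuss-Catalan numbers `F_m(a, b) = (b/(m a + b)) * C(m a + b, m)`, as rationals. -/
noncomputable def fussCatalan (m a b : ℕ) : ℚ :=
  (b : ℚ) / (m * a + b) * ((m * a + b).choose m : ℚ)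

lemma chooseQ (n m : ℕ) : ((n.choose (m+1) : ℚ)) * (m+1) = (n.choose m : ℚ) * ((n:ℚ) - m) := by
  rcases le_or_gt m n with h | h
  · have h2 : ((n.choose (m+1) : ℚ)) * (m+1) = (n.choose m : ℚ) * ((n - m : ℕ) : ℚ) := by
      exact_mod_cast Nat.choose_succ_right_eq n m
    rwa [Nat.cast_sub h] at h2
  · rw [Nat.choose_eq_zero_of_lt h, Nat.choose_eq_zero_of_lt (by omega)]
    simp

lemma lemB (a m : ℕ) (ha : 1 ≤ a) :
    fussCatalan (m+1) a 1 = fussCatalan m a a := by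
  unfold fussCatalan
  have key' : (((m+1)*a : ℕ) + 1 : ℚ) * (((m+1)*a).choose m : ℚ)
      = ((((m+1)*a)+1).choose (m+1) : ℚ) * ((m:ℚ)+1) := by
    exact_mod_cast Nat.add_one_mul_choose_eq ((m+1)*a) m
  have hN : (0:ℚ) < ((m+1)*a : ℕ) := by positivity
  have e2 : m * a + a = (m+1)*a := by ring
  rw [e2]
  push_cast at key' hN ⊢
  rw [div_mul_eq_mul_div, div_mul_eq_mul_div, div_eq_div_iff (by nlinarith) (by nlinarith)]
  nlinarith [key']

lemma lemA (a b m : ℕ) (hb : 1 ≤ b) :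
    fussCatalan (m+1) a (b+1) = fussCatalan (m+1) a b + fussCatalan m a (b+a) := by
  unfold fussCatalan
  have e1 : m * a + (b + a) = (m+1)*a + b := by ring
  have e2 : (m+1) * a + (b+1) = ((m+1)*a + b) + 1 := by ring
  rw [e1, e2]
  have pas : ((((m+1)*a+b) + 1).choose (m+1) : ℚ)
      = (((m+1)*a+b).choose m : ℚ) + (((m+1)*a+b).choose (m+1) : ℚ) := by
    exact_mod_cast Nat.choose_succ_succ' ((m+1)*a+b) m
  have cq := chooseQ ((m+1)*a+b) m
  have hd : ((m:ℚ)+1)*a + b ≠ 0 := by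
    have : (1:ℚ) ≤ b := by exact_mod_cast hb
    positivity
  have hd1 : ((m:ℚ)+1)*a + b + 1 ≠ 0 := by
    have : (1:ℚ) ≤ b := by exact_mod_cast hb
    positivity
  push_cast
  push_cast at pas cq
  field_simp
  linear_combination ((b:ℚ)+1)*(((m:ℚ)+1)*a+b)^2 * pas + (a:ℚ)*(((m:ℚ)+1)*a+b) * cq

lemma coeff_pow_congr (f g : PowerSeries ℚ) (a m : ℕ)
    (h : ∀ k ≤ m, coeff k f = coeff k g) :
    ∀ k ≤ m, coeff k (f ^ a) = coeff k (g ^ a) := by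
  induction a with
  | zero => intro k _; rfl
  | succ a ih =>
    intro k hk
    rw [pow_succ, pow_succ, coeff_mul, coeff_mul]
    refine Finset.sum_congr rfl fun p hp => ?_
    rw [Finset.HasAntidiagonal.mem_antidiagonal] at hp
    rw [ih p.1 (by omega), h p.2 (by omega)]

noncomputable def dAux (a : ℕ) : ℕ → ℚ
  | 0 => 1
  | m+1 => coeff m ((PowerSeries.mk fun k => if _ : k ≤ m then dAux a k else 0) ^ a)
  termination_by m => m
  decreasing_by omega

noncomputable def Dser (a : ℕ) : PowerSeries ℚ := PowerSeries.mk (dAux a)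

lemma Dser_const (a : ℕ) : constantCoeff (Dser a) = 1 := by
  rw [← coeff_zero_eq_constantCoeff]
  simp [Dser, dAux]

lemma Dser_funcEq (a : ℕ) : Dser a = 1 + X * (Dser a) ^ a := by
  ext m
  cases m with
  | zero => simp [Dser, dAux, coeff_zero_eq_constantCoeff]
  | succ m =>
    rw [map_add, coeff_succ_X_mul]
    have h1 : coeff (m+1) (1 : PowerSeries ℚ) = 0 := by
      simp [PowerSeries.coeff_one]
    rw [h1, zero_add]
    simp only [Dser, coeff_mk]
    rw [dAux]
    exact coeff_pow_congr _ _ a m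
      (fun k hk => by simp [Dser, coeff_mk, hk]) m le_rfl

lemma fussCatalan_zero (a b : ℕ) (hb : 1 ≤ b) : fussCatalan 0 a b = 1 := by
  have : (b:ℚ) ≠ 0 := by positivity
  simp [fussCatalan, this]

lemma main_coeff (a : ℕ) : ∀ m b, 1 ≤ b → coeff m ((Dser a)^b) = fussCatalan m a b := by
  intro m
  induction m using Nat.strong_induction_on with
  | _ m IH =>
    cases m with
    | zero =>
      intro b hb
      rw [coeff_zero_eq_constantCoeff, map_pow, Dser_const, one_pow,
        fussCatalan_zero a b hb]
    | succ m =>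
      intro b hb
      induction b, hb using Nat.le_induction with
      | base =>
        rw [pow_one]
        conv_lhs => rw [Dser_funcEq]
        rw [map_add, coeff_succ_X_mul]
        have h1 : coeff (m+1) (1 : PowerSeries ℚ) = 0 := by
          simp [PowerSeries.coeff_one]
        rw [h1, zero_add]
        rcases Nat.eq_zero_or_pos a with ha | ha
        · subst ha
          rw [pow_zero]
          cases m with
          | zero => simp [fussCatalan]
          | succ m =>
            rw [PowerSeries.coeff_one]
            simp [fussCatalan, Nat.choose_eq_zero_of_lt (by omega : 1 < m+1+1)]
        · rw [IH m (by omega) a ha, lemB a m ha]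
      | succ b hb ihb =>
        have hD : (Dser a)^(b+1) = (Dser a)^b + X * (Dser a)^(b+a) := by
          calc (Dser a)^(b+1) = (Dser a)^b * (Dser a) := pow_succ _ _
          _ = (Dser a)^b * (1 + X * (Dser a)^a) := by rw [← Dser_funcEq]
          _ = (Dser a)^b + X * (Dser a)^(b+a) := by rw [mul_add, mul_one, pow_add]; ring
        rw [hD, map_add, coeff_succ_X_mul, ihb, IH m (by omega) (b+a) (by omega),
          lemA a b m hb]

lemma main_pow (a b : ℕ) (hb : 1 ≤ b) :
    (Dser a) ^ b = PowerSeries.mk (fun m => fussCatalan m a b) := by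
  ext m
  rw [main_coeff a m b hb, coeff_mk]

/-- the generating function `C_(a,b)(t) = ∑_(m≥0) F_m(a,b) t^m` of the
Fuss-Catalan numbers satisfies `C_(a,b) = (t · C_(a,b)^(a/b) + 1)^b`; the fractional
power `C_(a,b)^(1/b)` is expressed via the (unique) power series `D` with constant
term 1 and `D^b = C_(a,b)`, so that `C_(a,b)^(a/b) = D^a`. In particular, for `b = 1`,
`C_(a,1)(t) = t · C_(a,1)(t)^a + 1`. -/
theorem fussCatalan_generating_function (a b : ℕ) (hb : 1 ≤ b) :
    (∃ D : PowerSeries ℚ, constantCoeff D = 1 ∧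
        D ^ b = PowerSeries.mk (fun m => fussCatalan m a b) ∧
        PowerSeries.mk (fun m => fussCatalan m a b) = (X * D ^ a + 1) ^ b) ∧
    PowerSeries.mk (fun m => fussCatalan m a 1)
      = X * (PowerSeries.mk (fun m => fussCatalan m a 1)) ^ a + 1 := by
  have h1 : PowerSeries.mk (fun m => fussCatalan m a 1) = Dser a := by
    rw [← main_pow a 1 le_rfl, pow_one]
  constructor
  · refine ⟨Dser a, Dser_const a, main_pow a b hb, ?_⟩
    rw [← main_pow a b hb]
    congr 1
    rw [add_comm]
    exact Dser_funcEq a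
  · rw [h1, add_comm]
    exact Dser_funcEq a
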